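/- Let R, C, F be finite sets, f : R → F a map, r′ a nonnegative integer, and A : R × C → {0,1} a binary matrix such that every column of A has at least r′ + 1 nonzero entries, and such that for every nonempty subset S ⊆ C one has m_f(A, S) ≥ |S| + r′. Then there exists a binary matrix B : R × C → {0,1} with B(ρ,c) = 1 implying A(ρ,c) = 1, such that every column of B has exactly r′ + 1 nonzero entries, and for every nonempty subset S ⊆ C one has m_f(B, S) ≥ |S| + r′. -/

import Mathlib

set_option linter.unusedSectionVars false
open Finset

set_option linter.unusedSectionVars false
open Finset
section Aux
variable {R C F : Type*} [Fintype R] [Fintype C] [DecidableEq R] [DecidableEq C] [DecidableEq F]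
variable (f : R → F)

def mA (supp : C → Finset R) (S : Finset C) : ℕ := ((S.biUnion supp).image f).card

lemma mA_mono (supp : C → Finset R) {S T : Finset C} (h : S ⊆ T) : mA f supp S ≤ mA f supp T :=
  card_le_card (image_subset_image (biUnion_subset_biUnion_of_subset_left _ h))

lemma mA_submodular (supp : C → Finset R) (S T : Finset C) :
    mA f supp (S ∪ T) + mA f supp (S ∩ T) ≤ mA f supp S + mA f supp T := by
  have h1 : (S ∪ T).biUnion supp = S.biUnion supp ∪ T.biUnion supp := by
    ext ρ; simp [mem_biUnion, or_and_right, exists_or]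
  have h2 : mA f supp (S ∪ T) = ((S.biUnion supp).image f ∪ (T.biUnion supp).image f).card := by
    rw [mA, h1, image_union]
  have h3 : ((S ∩ T).biUnion supp).image f ⊆ (S.biUnion supp).image f ∩ (T.biUnion supp).image f := by
    intro x hx
    simp only [mem_image, mem_biUnion, mem_inter] at *
    obtain ⟨ρ, ⟨c, hc, hρ⟩, rfl⟩ := hx
    exact ⟨⟨ρ, ⟨c, hc.1, hρ⟩, rfl⟩, ⟨ρ, ⟨c, hc.2, hρ⟩, rfl⟩⟩
  have := card_union_add_card_inter ((S.biUnion supp).image f) ((T.biUnion supp).image f)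
  have h4 := card_le_card h3
  unfold mA at *
  omega
end Aux
section Aux2
set_option linter.unusedSectionVars false
variable {R C F : Type*} [Fintype R] [Fintype C] [DecidableEq R] [DecidableEq C] [DecidableEq F]
variable (f : R → F) (r' : ℕ)

def tightP (supp : C → Finset R) (c₀ : C) (X : Finset C) : Prop :=
  c₀ ∈ X ∧ mA f supp X = X.card + r'

lemma tight_inter (supp : C → Finset R) (c₀ : C)
    (hHall : ∀ S : Finset C, S.Nonempty → S.card + r' ≤ mA f supp S)
    {S T : Finset C} (hS : tightP f r' supp c₀ S) (hT : tightP f r' supp c₀ T) :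
    tightP f r' supp c₀ (S ∩ T) := by
  obtain ⟨hcS, hmS⟩ := hS
  obtain ⟨hcT, hmT⟩ := hT
  have hmem : c₀ ∈ S ∩ T := mem_inter.2 ⟨hcS, hcT⟩
  have h1 := mA_submodular f supp S T
  have h2 := hHall (S ∪ T) ⟨c₀, mem_union_left _ hcS⟩
  have h3 := hHall (S ∩ T) ⟨c₀, hmem⟩
  have h4 := card_union_add_card_inter S T
  exact ⟨hmem, by omega⟩

lemma tight_inf (supp : C → Finset R) (c₀ : C)
    (hHall : ∀ S : Finset C, S.Nonempty → S.card + r' ≤ mA f supp S)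
    {α : Type*} (t : Finset α) (ht : t.Nonempty) (Sf : α → Finset C)
    (h : ∀ a ∈ t, tightP f r' supp c₀ (Sf a)) :
    tightP f r' supp c₀ (t.inf' ht Sf) := by
  induction ht using Finset.Nonempty.cons_induction with
  | singleton a => simpa using h a (by simp)
  | cons a s ha hs ih =>
    rw [inf'_cons hs]
    exact tight_inter f r' supp c₀ hHall (h a (by simp))
      (ih (fun b hb => h b (mem_cons_of_mem hb)))
end Aux2

section Aux3
set_option linter.unusedSectionVars false
variable {R C F : Type*} [Fintype R] [Fintype C] [DecidableEq R] [DecidableEq C] [DecidableEq F]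
variable (f : R → F) (r' : ℕ)

lemma removal_claim (supp : C → Finset R) (c₀ : C)
    (hHall : ∀ S : Finset C, S.Nonempty → S.card + r' ≤ mA f supp S)
    (hc : r' + 2 ≤ (supp c₀).card) :
    ∃ ρ ∈ supp c₀, ∀ S : Finset C, S.Nonempty →
      S.card + r' ≤ mA f (Function.update supp c₀ ((supp c₀).erase ρ)) S := by
  by_contra hcon
  push_neg at hcon
  have key : ∀ ρ : R, ∃ S : Finset C, ρ ∈ supp c₀ → tightP f r' supp c₀ S ∧
      (∀ ρ' ∈ S.biUnion supp, f ρ' = f ρ → ρ' = ρ) ∧ ρ ∉ (S.erase c₀).biUnion supp := by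
    intro ρ
    by_cases hρ : ρ ∈ supp c₀
    swap
    · exact ⟨∅, fun h => absurd h hρ⟩
    obtain ⟨S, hSne, hSlt⟩ := hcon ρ hρ
    set supp' := Function.update supp c₀ ((supp c₀).erase ρ) with hsupp'
    refine ⟨S, fun _ => ?_⟩
    have hmem' : ∀ ρ', ρ' ≠ ρ → ρ' ∈ S.biUnion supp → ρ' ∈ S.biUnion supp' := by
      intro ρ' hne hx
      simp only [mem_biUnion] at *
      obtain ⟨c, hc1, hc2⟩ := hx
      refine ⟨c, hc1, ?_⟩
      by_cases h : c = c₀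
      · subst h; simp only [supp', Function.update_self]; exact mem_erase.2 ⟨hne, hc2⟩
      · simpa only [supp', Function.update_of_ne h] using hc2
    have hc₀S : c₀ ∈ S := by
      by_contra hh
      have heq : S.biUnion supp' = S.biUnion supp := by
        apply biUnion_congr rfl
        intro c hcS
        simp only [supp', Function.update_of_ne (fun e => hh (by rwa [e] at hcS) : ¬ c = c₀)]
      have := hHall S hSne
      rw [mA, heq, ← mA] at hSlt
      omega
    have hins : S.biUnion supp ⊆ insert ρ (S.biUnion supp') := by
      intro x hx
      rcases eq_or_ne x ρ with rfl | hne
      · exact mem_insert_self _ _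
      · exact mem_insert_of_mem (hmem' x hne hx)
    have hcard : mA f supp S ≤ mA f supp' S + 1 := by
      calc mA f supp S ≤ ((insert ρ (S.biUnion supp')).image f).card :=
            card_le_card (image_subset_image hins)
        _ ≤ _ := by rw [image_insert]; exact (card_insert_le _ _)
    have hfρ : f ρ ∉ (S.biUnion supp').image f := by
      intro hin
      have : (S.biUnion supp).image f ⊆ (S.biUnion supp').image f := by
        rw [← insert_eq_self.2 hin, ← image_insert]
        exact image_subset_image hins
      have := card_le_card this
      have := hHall S hSne
      rw [mA] at *
      omega
    have hHS := hHall S hSne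
    refine ⟨⟨hc₀S, by omega⟩, ?_, ?_⟩
    · intro ρ' hρ' hf
      by_contra hne
      exact hfρ (hf ▸ mem_image_of_mem f (hmem' ρ' hne hρ'))
    · intro hmem
      apply hfρ
      apply mem_image_of_mem
      simp only [mem_biUnion, mem_erase] at hmem ⊢
      obtain ⟨c, ⟨hcne, hcS⟩, hρc⟩ := hmem
      exact ⟨c, hcS, by simp only [supp', Function.update_of_ne hcne]; exact hρc⟩
  choose Sf hSf using key
  have hne : (supp c₀).Nonempty := card_pos.1 (by omega)
  set T := (supp c₀).inf' hne Sf with hT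
  have hTsub : ∀ ρ ∈ supp c₀, T ⊆ Sf ρ := fun ρ hρ => inf'_le _ hρ
  have hTtight : tightP f r' supp c₀ T :=
    tight_inf f r' supp c₀ hHall _ hne Sf (fun ρ hρ => ((hSf ρ) hρ).1)
  obtain ⟨hc₀T, hmT⟩ := hTtight
  set T' := T.erase c₀ with hT'
  have hbi : T.biUnion supp = supp c₀ ∪ T'.biUnion supp := by
    conv_lhs => rw [← insert_erase hc₀T]
    rw [biUnion_insert]
  have hinj : Set.InjOn f (supp c₀ : Set R) := by
    intro ρ₁ h1 ρ₂ h2 hf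
    have := ((hSf ρ₂) h2).2.1 ρ₁ (mem_biUnion.2 ⟨c₀, hc₀T, h1⟩ |>
      (fun h => biUnion_subset_biUnion_of_subset_left supp (hTsub ρ₂ h2) h)) hf
    exact this
  have hdisj : Disjoint ((supp c₀).image f) ((T'.biUnion supp).image f) := by
    rw [disjoint_left]
    rintro x hx1 hx2
    obtain ⟨ρ, hρ, rfl⟩ := mem_image.1 hx1
    obtain ⟨ρ', hρ', hf⟩ := mem_image.1 hx2
    have hρ'T : ρ' ∈ ((Sf ρ).erase c₀).biUnion supp :=
      biUnion_subset_biUnion_of_subset_left supp (erase_subset_erase c₀ (hTsub ρ hρ)) hρ'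
    have : ρ' = ρ := ((hSf ρ) hρ).2.1 ρ'
      (biUnion_subset_biUnion_of_subset_left supp (erase_subset c₀ (Sf ρ)) hρ'T) hf
    exact ((hSf ρ) hρ).2.2 (this ▸ hρ'T)
  have hcardT : mA f supp T = (supp c₀).card + ((T'.biUnion supp).image f).card := by
    rw [mA, hbi, image_union, card_union_of_disjoint hdisj, card_image_of_injOn hinj]
  have hT'card : T'.card ≤ ((T'.biUnion supp).image f).card := by
    rcases T'.eq_empty_or_nonempty with he | hn
    · simp [he]
    · have := hHall T' hn; rw [mA] at this; omega
  have hTcard : T.card = T'.card + 1 := by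
    rw [hT', card_erase_of_mem hc₀T]
    have : 1 ≤ T.card := card_pos.2 ⟨c₀, hc₀T⟩
    omega
  omega

lemma sparsify_aux (n : ℕ) : ∀ (supp : C → Finset R),
    (∑ c, (supp c).card ≤ n) →
    (∀ c, r' + 1 ≤ (supp c).card) →
    (∀ S : Finset C, S.Nonempty → S.card + r' ≤ mA f supp S) →
    ∃ t : C → Finset R, (∀ c, t c ⊆ supp c) ∧ (∀ c, (t c).card = r' + 1) ∧
      ∀ S : Finset C, S.Nonempty → S.card + r' ≤ mA f t S := by
  induction n with
  | zero =>
    intro supp hsum hcol hHall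
    refine ⟨supp, fun c => Subset.rfl, fun c => ?_, hHall⟩
    have h1 : (supp c).card ≤ ∑ c, (supp c).card :=
      single_le_sum (f := fun c => (supp c).card) (fun i _ => Nat.zero_le _) (mem_univ c)
    have := hcol c
    omega
  | succ n ih =>
    intro supp hsum hcol hHall
    by_cases hall : ∀ c, (supp c).card = r' + 1
    · exact ⟨supp, fun c => Subset.rfl, hall, hHall⟩
    push_neg at hall
    obtain ⟨c₀, hc₀⟩ := hall
    have hc : r' + 2 ≤ (supp c₀).card := by have := hcol c₀; omega
    obtain ⟨ρ, hρ, hHall'⟩ := removal_claim f r' supp c₀ hHall hc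
    set supp' := Function.update supp c₀ ((supp c₀).erase ρ) with hs'
    have hsub : ∀ c, supp' c ⊆ supp c := by
      intro c
      by_cases h : c = c₀
      · subst h; simp only [supp', Function.update_self]; exact erase_subset _ _
      · simp only [supp', Function.update_of_ne h]; exact Subset.rfl
    have hcard' : (supp' c₀).card = (supp c₀).card - 1 := by
      simp only [supp', Function.update_self]; exact card_erase_of_mem hρ
    have hcol' : ∀ c, r' + 1 ≤ (supp' c).card := by
      intro c
      by_cases h : c = c₀
      · subst h; omega
      · simp only [supp', Function.update_of_ne h]; exact hcol c
    have hsum' : ∑ c, (supp' c).card ≤ n := by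
      have h1 : ∑ c, (supp' c).card = (supp' c₀).card + ∑ c ∈ univ.erase c₀, (supp c).card := by
        rw [← Finset.add_sum_erase _ _ (mem_univ c₀)]
        congr 1
        refine Finset.sum_congr rfl fun c hcmem => ?_
        simp only [supp', Function.update_of_ne (mem_erase.1 hcmem).1]
      have h2 : ∑ c, (supp c).card = (supp c₀).card + ∑ c ∈ univ.erase c₀, (supp c).card :=
        (Finset.add_sum_erase _ _ (mem_univ c₀)).symm
      omega
    obtain ⟨t, ht1, ht2, ht3⟩ := ih supp' hsum' hcol' hHall'
    exact ⟨t, fun c => (ht1 c).trans (hsub c), ht2, ht3⟩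

end Aux3

open Finset in
/-- (Deterministic sparsification.) If every column of the
binary matrix `A` has at least `r' + 1` ones and every nonempty set `S` of
columns satisfies the Hall-type bound `m_f(A, S) ≥ |S| + r'`, then one can
choose a binary matrix `B ≤ A` whose columns have exactly `r' + 1` ones and
which still satisfies the Hall-type bound. -/
theorem exists_sparsified_pattern {R C F : Type*}
    [Fintype R] [Fintype C] [Fintype F] [DecidableEq F]
    (f : R → F) (r' : ℕ) (A : R → C → Bool)
    (hcol : ∀ c : C, r' + 1 ≤ (univ.filter fun ρ => A ρ c).card)
    (hHall : ∀ S : Finset C, S.Nonempty →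
      S.card + r' ≤ ((univ.filter fun ρ => ∃ c ∈ S, A ρ c).image f).card) :
    ∃ B : R → C → Bool,
      (∀ ρ c, B ρ c → A ρ c) ∧
      (∀ c : C, (univ.filter fun ρ => B ρ c).card = r' + 1) ∧
      (∀ S : Finset C, S.Nonempty →
        S.card + r' ≤ ((univ.filter fun ρ => ∃ c ∈ S, B ρ c).image f).card) := by
  classical
  set supp : C → Finset R := fun c => univ.filter fun ρ => A ρ c with hsupp
  have hfil : ∀ S : Finset C, (univ.filter fun ρ => ∃ c ∈ S, A ρ c) = S.biUnion supp := by
    intro S; ext ρ; simp [supp, mem_biUnion]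
  have hHall' : ∀ S : Finset C, S.Nonempty → S.card + r' ≤ mA f supp S := by
    intro S hS
    have := hHall S hS
    rwa [hfil S] at this
  have hcol' : ∀ c, r' + 1 ≤ (supp c).card := hcol
  obtain ⟨t, ht1, ht2, ht3⟩ := sparsify_aux f r' (∑ c, (supp c).card) supp le_rfl hcol' hHall'
  refine ⟨fun ρ c => decide (ρ ∈ t c), ?_, ?_, ?_⟩
  · intro ρ c hB
    have : ρ ∈ t c := of_decide_eq_true hB
    have := ht1 c this
    simpa [supp] using this
  · intro c
    have : (univ.filter fun ρ => decide (ρ ∈ t c)) = t c := by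
      ext ρ; simp
    rw [this]; exact ht2 c
  · intro S hS
    have : (univ.filter fun ρ => ∃ c ∈ S, decide (ρ ∈ t c)) = S.biUnion t := by
      ext ρ; simp [mem_biUnion]
    rw [this]; exact ht3 S hS
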